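/- Let V = {(x,y) : -1/4 < x < 1/4, 2|x| < y < 1/2} and define the covariance C_V(x,x') = λ(V ∩ (V + (x'-x))) with λ the hyperbolic area measure. Then for 0 < |x - x'| ≤ 1/2, C_V(x,x') = log(1/(2|x-x'|)) + 2|x-x'| - 1. -/

import Mathlib

open Real MeasureTheory

/-- The hyperbolic area measure `dx dy / y²`. -/
noncomputable def hypMeasure : Measure (ℝ × ℝ) :=
  volume.withDensity (fun p => ENNReal.ofReal (1 / p.2 ^ 2))

/-- The triangular region `V`. -/
def triangleV : Set (ℝ × ℝ) :=
  {p | -(1/4) < p.1 ∧ p.1 < 1/4 ∧ 2 * |p.1| < p.2 ∧ p.2 < 1/2}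

/-- Horizontal translate of a planar set. -/
def htrans (A : Set (ℝ × ℝ)) (t : ℝ) : Set (ℝ × ℝ) := {p | (p.1 - t, p.2) ∈ A}

/-- For `0 < |x - x'| ≤ 1/2`,
`λ(V ∩ (V + (x'-x))) = log (1/(2|x-x'|)) + 2|x-x'| - 1`. -/
theorem hyp_area_triangle_covariance (x x' : ℝ) (h0 : 0 < |x - x'|) (h1 : |x - x'| ≤ 1/2) :
    hypMeasure (triangleV ∩ htrans triangleV (x' - x))
      = ENNReal.ofReal (Real.log (1 / (2 * |x - x'|)) + 2 * |x - x'| - 1) := by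
  set t := x' - x with ht
  set s := |x - x'| with hs
  have hst : s = |t| := by rw [hs, ht, abs_sub_comm]
  -- Step 1: simplify the set
  have hset : triangleV ∩ htrans triangleV t
      = {p : ℝ × ℝ | 2 * |p.1| < p.2 ∧ 2 * |p.1 - t| < p.2 ∧ p.2 < 1/2} := by
    ext ⟨a, y⟩
    simp only [triangleV, htrans, Set.mem_inter_iff, Set.mem_setOf_eq]
    constructor
    · rintro ⟨⟨_, _, h3, h4⟩, _, _, h7, _⟩
      exact ⟨h3, h7, h4⟩
    · rintro ⟨h3, h7, h4⟩
      have ha : |a| < 1/4 := by nlinarith [abs_nonneg a]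
      have ha' : |a - t| < 1/4 := by nlinarith [abs_nonneg (a - t)]
      rw [abs_lt] at ha ha'
      exact ⟨⟨by linarith [ha.1], by linarith [ha.2], h3, h4⟩,
             by linarith [ha'.1], by linarith [ha'.2], h7, h4⟩
  set S : Set (ℝ × ℝ) := {p : ℝ × ℝ | 2 * |p.1| < p.2 ∧ 2 * |p.1 - t| < p.2 ∧ p.2 < 1/2}
    with hS
  have hmeas : MeasurableSet S := by
    have : S = {p : ℝ × ℝ | 2 * |p.1| < p.2} ∩ ({p | 2 * |p.1 - t| < p.2} ∩ {p | p.2 < 1/2}) := by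
      ext p; simp [hS, Set.mem_setOf_eq]
    rw [this]
    exact (measurableSet_lt (by fun_prop) (by fun_prop)).inter
      ((measurableSet_lt (by fun_prop) (by fun_prop)).inter
        (measurableSet_lt (by fun_prop) measurable_const))
  rw [hset]
  unfold hypMeasure
  rw [withDensity_apply _ hmeas, ← lintegral_indicator hmeas, Measure.volume_eq_prod,
    lintegral_prod_symm' _ (((by fun_prop : Measurable
      (fun p : ℝ × ℝ => ENNReal.ofReal (1 / p.2 ^ 2))).indicator hmeas))]
  have key : ∀ y : ℝ, (∫⁻ a, S.indicator (fun p => ENNReal.ofReal (1 / p.2 ^ 2)) (a, y) ∂volume)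
      = (Set.Ioo s (1/2)).indicator (fun y => ENNReal.ofReal ((y - s) / y ^ 2)) y := by
    intro y
    by_cases hy : y ∈ Set.Ioo s (1/2)
    · have hA : (fun a : ℝ => S.indicator (fun p => ENNReal.ofReal (1 / p.2 ^ 2)) (a, y))
          = (Set.Ioo (max (-(y/2)) (t - y/2)) (min (y/2) (t + y/2))).indicator
              (fun _ => ENNReal.ofReal (1 / y ^ 2)) := by
        funext a
        have hmemiff : (a, y) ∈ S ↔
            a ∈ Set.Ioo (max (-(y/2)) (t - y/2)) (min (y/2) (t + y/2)) := by
          simp only [hS, Set.mem_setOf_eq, Set.mem_Ioo, max_lt_iff, lt_min_iff]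
          constructor
          · rintro ⟨hb1, hb2, _⟩
            have ha1 := abs_lt.mp (show |a| < y/2 by linarith)
            have ha2 := abs_lt.mp (show |a - t| < y/2 by linarith)
            exact ⟨⟨by linarith [ha1.1], by linarith [ha2.1]⟩,
              by linarith [ha1.2], by linarith [ha2.2]⟩
          · rintro ⟨⟨hb1, hb2⟩, hb3, hb4⟩
            have ha1 : |a| < y/2 := abs_lt.mpr ⟨by linarith, hb3⟩
            have ha2 : |a - t| < y/2 := abs_lt.mpr ⟨by linarith, by linarith⟩
            exact ⟨by linarith, by linarith, hy.2⟩
        by_cases hmem : (a, y) ∈ S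
        · rw [Set.indicator_of_mem hmem, Set.indicator_of_mem (hmemiff.mp hmem)]
        · rw [Set.indicator_of_notMem hmem,
            Set.indicator_of_notMem (fun h => hmem (hmemiff.mpr h))]
      rw [hA, lintegral_indicator measurableSet_Ioo, setLIntegral_const, Real.volume_Ioo,
        Set.indicator_of_mem hy]
      have hRL : min (y/2) (t + y/2) - max (-(y/2)) (t - y/2) = y - s := by
        rw [hst]
        rcases le_total 0 t with h | h
        · rw [abs_of_nonneg h, min_eq_left (by linarith), max_eq_right (by linarith)]; ring
        · rw [abs_of_nonpos h, min_eq_right (by linarith), max_eq_left (by linarith)]; ring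
      rw [hRL, ← ENNReal.ofReal_mul (by positivity)]
      congr 1
      ring
    · have hA : ∀ a : ℝ, (a, y) ∉ S := by
        intro a hmem
        simp only [hS, Set.mem_setOf_eq] at hmem
        obtain ⟨hb1, hb2, hb3⟩ := hmem
        have htr : |t| ≤ |a| + |a - t| := by
          calc |t| = |a + (t - a)| := by ring_nf
            _ ≤ |a| + |t - a| := abs_add_le _ _
            _ = |a| + |a - t| := by rw [abs_sub_comm]
        have hsy : s < y := by rw [hst]; linarith
        exact hy ⟨hsy, hb3⟩
      rw [Set.indicator_of_notMem hy]
      have : (fun a : ℝ => S.indicator (fun p => ENNReal.ofReal (1 / p.2 ^ 2)) (a, y))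
          = fun _ => 0 := by
        funext a
        exact Set.indicator_of_notMem (hA a) _
      rw [this, lintegral_const, zero_mul]
  simp_rw [key]
  rw [lintegral_indicator measurableSet_Ioo]
  have hcont : ContinuousOn (fun y => (y - s) / y ^ 2) (Set.Icc s (1/2)) := by
    apply ContinuousOn.div (by fun_prop) (by fun_prop)
    intro y hy
    have hy0 : 0 < y := lt_of_lt_of_le h0 hy.1
    positivity
  have hint : IntegrableOn (fun y => (y - s) / y ^ 2) (Set.Ioo s (1/2)) volume :=
    (hcont.integrableOn_Icc).mono_set Set.Ioo_subset_Icc_self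
  have hnn : 0 ≤ᵐ[volume.restrict (Set.Ioo s (1/2))] fun y => (y - s) / y ^ 2 := by
    refine (ae_restrict_iff' measurableSet_Ioo).mpr (Filter.Eventually.of_forall fun y hy => ?_)
    exact div_nonneg (by linarith [hy.1]) (sq_nonneg y)
  rw [← MeasureTheory.ofReal_integral_eq_lintegral_ofReal hint hnn]
  congr 1
  have hIII : ∫ y in Set.Ioo s (1/2), (y - s) / y ^ 2
      = ∫ y in s..(1/2), (y - s) / y ^ 2 := by
    rw [intervalIntegral.integral_of_le h1, MeasureTheory.integral_Ioc_eq_integral_Ioo]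
  have hFTC : ∫ y in s..(1/2), (y - s)/y^2
      = (Real.log (1/2) + s * (1/2)⁻¹) - (Real.log s + s * s⁻¹) := by
    have hderiv : ∀ y ∈ Set.uIcc s (1/2),
        HasDerivAt (fun y => Real.log y + s * y⁻¹) ((y - s)/y^2) y := by
      intro y hy
      rw [Set.uIcc_of_le h1] at hy
      have hy0 : 0 < y := lt_of_lt_of_le h0 hy.1
      have hd1 : HasDerivAt Real.log y⁻¹ y := Real.hasDerivAt_log hy0.ne'
      have hd2 : HasDerivAt (fun y : ℝ => s * y⁻¹) (s * (-(y^2)⁻¹)) y :=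
        (hasDerivAt_inv hy0.ne').const_mul s
      refine (hd1.add hd2).congr_deriv ?_
      have hyne : y ≠ 0 := hy0.ne'
      field_simp
      ring
    have hi2 : IntervalIntegrable (fun y => (y - s)/y^2) volume s (1/2) := by
      apply ContinuousOn.intervalIntegrable
      rw [Set.uIcc_of_le h1]
      exact hcont
    exact intervalIntegral.integral_eq_sub_of_hasDerivAt hderiv hi2
  rw [hIII, hFTC]
  have e1 : Real.log (1/(2*s)) = -(Real.log 2 + Real.log s) := by
    rw [one_div, Real.log_inv, Real.log_mul two_ne_zero (ne_of_gt h0)]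
  have e2 : Real.log (1/2 : ℝ) = -Real.log 2 := by
    rw [one_div, Real.log_inv]
  have e3 : s * s⁻¹ = 1 := mul_inv_cancel₀ (ne_of_gt h0)
  rw [e1, e2, e3]
  norm_num
  ring
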